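/- Let G be a group generated by a finite symmetric set S, with balls B_G(r) and right-invariant word metric d_G. Let η, r > 0, let F ⊆ G be an (η,r)-Følner set, and let F = F_1 ∪ … ∪ F_k be its partition into maximal (2r)-connected subsets. Then there exists an index i with 1 ≤ i ≤ k such that |(B_G(r)·F_i) \ F_i| ≤ η |F_i|, i.e. some maximal (2r)-connected component of F is itself (η,r)-Følner. -/

import Mathlib

open scoped Pointwise

/-- The word length of `g` with respect to the generating set `S`. -/
noncomputable def wordLength {G : Type*} [Group G] (S : Set G) (g : G) : ℕ :=
  sInf {n | ∃ l : List G, l.length = n ∧ (∀ s ∈ l, s ∈ S) ∧ l.prod = g}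

/-- The right-invariant word metric `d_G(g,h) = |g h⁻¹|_G`. -/
noncomputable def wordDist {G : Type*} [Group G] (S : Set G) (g h : G) : ℕ :=
  wordLength S (g * h⁻¹)

/-- The ball `B_G(r) = {g : |g|_G ≤ r}`. -/
def wordBall {G : Type*} [Group G] (S : Set G) (r : ℝ) : Set G :=
  {g : G | (wordLength S g : ℝ) ≤ r}

/-- `F` is an (ε,r)-Følner set: finite, nonempty, with `|(B_G(r)·F) \ F| ≤ ε|F|`. -/
def IsFolner {G : Type*} [Group G] (S : Set G) (ε r : ℝ) (F : Set G) : Prop :=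
  F.Finite ∧ F.Nonempty ∧
    (((wordBall S r * F) \ F).ncard : ℝ) ≤ ε * (F.ncard : ℝ)

/-- `E` is r-connected for the word metric. -/
def RConnected {G : Type*} [Group G] (S : Set G) (r : ℝ) (E : Set G) : Prop :=
  ∀ g ∈ E, ∀ h ∈ E, Relation.ReflTransGen
    (fun a b => a ∈ E ∧ b ∈ E ∧ (wordDist S a b : ℝ) ≤ r) g h

section Aux

variable {G : Type*} [Group G] {S : Set G}

lemma exists_word (hSsym : ∀ s ∈ S, s⁻¹ ∈ S) (hSgen : Subgroup.closure S = ⊤) (g : G) :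
    ∃ l : List G, (∀ s ∈ l, s ∈ S) ∧ l.prod = g := by
  have hg : g ∈ (Subgroup.closure S).toSubmonoid := by rw [hSgen]; trivial
  rw [Subgroup.closure_toSubmonoid] at hg
  obtain ⟨l, hl, hprod⟩ := Submonoid.exists_list_of_mem_closure hg
  refine ⟨l, fun s hs => ?_, hprod⟩
  rcases hl s hs with h | h
  · exact h
  · simpa using hSsym _ h

lemma wordLength_spec (hSsym : ∀ s ∈ S, s⁻¹ ∈ S) (hSgen : Subgroup.closure S = ⊤) (g : G) :
    ∃ l : List G, l.length = wordLength S g ∧ (∀ s ∈ l, s ∈ S) ∧ l.prod = g := by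
  have hne : {n | ∃ l : List G, l.length = n ∧ (∀ s ∈ l, s ∈ S) ∧ l.prod = g}.Nonempty := by
    obtain ⟨l, hl, hp⟩ := exists_word hSsym hSgen g
    exact ⟨l.length, l, rfl, hl, hp⟩
  exact Nat.sInf_mem hne

lemma wordLength_le_of_list {g : G} {l : List G} (hl : ∀ s ∈ l, s ∈ S) (hp : l.prod = g) :
    wordLength S g ≤ l.length :=
  Nat.sInf_le ⟨l, rfl, hl, hp⟩

lemma wordLength_mul_le (hSsym : ∀ s ∈ S, s⁻¹ ∈ S) (hSgen : Subgroup.closure S = ⊤) (g h : G) :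
    wordLength S (g * h) ≤ wordLength S g + wordLength S h := by
  obtain ⟨l1, hl1, hm1, hp1⟩ := wordLength_spec hSsym hSgen g
  obtain ⟨l2, hl2, hm2, hp2⟩ := wordLength_spec hSsym hSgen h
  have := wordLength_le_of_list (S := S) (g := g * h) (l := l1 ++ l2)
    (by intro s hs; rcases List.mem_append.1 hs with h | h; exacts [hm1 s h, hm2 s h])
    (by rw [List.prod_append, hp1, hp2])
  simpa [hl1, hl2] using this

lemma wordLength_inv_le (hSsym : ∀ s ∈ S, s⁻¹ ∈ S) (hSgen : Subgroup.closure S = ⊤) (g : G) :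
    wordLength S g⁻¹ ≤ wordLength S g := by
  obtain ⟨l, hl, hm, hp⟩ := wordLength_spec hSsym hSgen g
  have := wordLength_le_of_list (S := S) (g := g⁻¹) (l := (l.map fun x => x⁻¹).reverse)
    (by intro s hs
        simp only [List.mem_reverse, List.mem_map] at hs
        obtain ⟨a, ha, rfl⟩ := hs
        exact hSsym _ (hm a ha))
    (by rw [← List.prod_inv_reverse, hp])
  simpa [hl] using this

lemma wordDist_symm_le (hSsym : ∀ s ∈ S, s⁻¹ ∈ S) (hSgen : Subgroup.closure S = ⊤) (g h : G) :
    wordDist S h g ≤ wordDist S g h := by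
  have := wordLength_inv_le hSsym hSgen (g * h⁻¹)
  simpa [wordDist, mul_inv_rev] using this

lemma list_prod_mem_pow (T : Set G) : ∀ l : List G, (∀ s ∈ l, s ∈ T) → l.prod ∈ T ^ l.length := by
  intro l
  induction l with
  | nil => intro _; simp [Set.mem_one]
  | cons a l ih =>
    intro h
    rw [List.length_cons, pow_succ', List.prod_cons]
    exact Set.mul_mem_mul (h a List.mem_cons_self) (ih fun s hs => h s (List.mem_cons_of_mem _ hs))

lemma wordBall_finite (hSfin : S.Finite) (hSsym : ∀ s ∈ S, s⁻¹ ∈ S)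
    (hSgen : Subgroup.closure S = ⊤) (r : ℝ) : (wordBall S r).Finite := by
  have hT : (insert (1:G) S).Finite := hSfin.insert 1
  have hpow : ∀ n : ℕ, ((insert (1:G) S) ^ n).Finite := by
    intro n
    induction n with
    | zero => simpa using Set.finite_one
    | succ n ih => rw [pow_succ]; exact ih.mul hT
  refine (hpow ⌊r⌋₊).subset ?_
  intro g hg
  obtain ⟨l, hl, hm, hp⟩ := wordLength_spec hSsym hSgen g
  have h1 : l.prod ∈ S ^ l.length := list_prod_mem_pow S l hm
  have h2 : l.length ≤ ⌊r⌋₊ := by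
    rw [hl]
    exact Nat.le_floor hg
  rw [hp] at h1
  exact Set.pow_subset_pow (Set.subset_insert _ _) (Set.mem_insert _ _) h2 h1

end Aux

theorem stmt16 {G : Type*} [Group G] (S : Set G) (hSfin : S.Finite)
    (hSsym : ∀ s ∈ S, s⁻¹ ∈ S) (hSgen : Subgroup.closure S = ⊤)
    {η r : ℝ} (hη : 0 < η) (hr : 0 < r)
    (F : Set G) (hF : IsFolner S η r F)
    -- the partition of F into maximal (2r)-connected subsets F_1, …, F_k
    (k : ℕ) (comp : Fin k → Set G)
    (hcover : (⋃ i, comp i) = F)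
    (hdisj : ∀ i j, i ≠ j → Disjoint (comp i) (comp j))
    (hne : ∀ i, (comp i).Nonempty)
    (hconn : ∀ i, RConnected S (2 * r) (comp i))
    (hmax : ∀ i, ∀ E' : Set G, comp i ⊆ E' → E' ⊆ F →
      RConnected S (2 * r) E' → E' = comp i) :
    -- some component is itself (η,r)-Følner
    ∃ i, (((wordBall S r * comp i) \ comp i).ncard : ℝ) ≤ η * ((comp i).ncard : ℝ) := by
  classical
  obtain ⟨hFfin, hFne, hFbound⟩ := hF
  have hcompsub : ∀ i, comp i ⊆ F := fun i => hcover ▸ Set.subset_iUnion comp i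
  have hcompfin : ∀ i, (comp i).Finite := fun i => hFfin.subset (hcompsub i)
  -- merging lemma: two components containing points at distance ≤ 2r coincide
  have key : ∀ i j : Fin k, ∀ f ∈ comp i, ∀ x ∈ comp j,
      (wordDist S x f : ℝ) ≤ 2 * r → i = j := by
    intro i j f hf x hx hd
    by_contra hij
    have hd' : (wordDist S f x : ℝ) ≤ 2 * r :=
      le_trans (Nat.cast_le.2 (wordDist_symm_le hSsym hSgen x f)) hd
    set E' : Set G := comp i ∪ comp j with hE'
    have hisub : comp i ⊆ E' := Set.subset_union_left
    have hjsub : comp j ⊆ E' := Set.subset_union_right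
    have mono1 : ∀ (c : Fin k), comp c ⊆ E' → ∀ g ∈ comp c, ∀ h ∈ comp c,
        Relation.ReflTransGen
          (fun a b => a ∈ E' ∧ b ∈ E' ∧ (wordDist S a b : ℝ) ≤ 2 * r) g h := by
      intro c hsub g hg h hh
      exact Relation.ReflTransGen.mono (fun a b hab => ⟨hsub hab.1, hsub hab.2.1, hab.2.2⟩) g h (hconn c g hg h hh)
    have crossfx : Relation.ReflTransGen
        (fun a b => a ∈ E' ∧ b ∈ E' ∧ (wordDist S a b : ℝ) ≤ 2 * r) f x :=
      Relation.ReflTransGen.single ⟨hisub hf, hjsub hx, hd'⟩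
    have crossxf : Relation.ReflTransGen
        (fun a b => a ∈ E' ∧ b ∈ E' ∧ (wordDist S a b : ℝ) ≤ 2 * r) x f :=
      Relation.ReflTransGen.single ⟨hjsub hx, hisub hf, hd⟩
    have hconn' : RConnected S (2 * r) E' := by
      intro g hg h hh
      rcases hg with hg | hg <;> rcases hh with hh | hh
      · exact mono1 i hisub g hg h hh
      · exact ((mono1 i hisub g hg f hf).trans crossfx).trans (mono1 j hjsub x hx h hh)
      · exact ((mono1 j hjsub g hg x hx).trans crossxf).trans (mono1 i hisub f hf h hh)
      · exact mono1 j hjsub g hg h hh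
    have hEeq : E' = comp i :=
      hmax i E' hisub (Set.union_subset (hcompsub i) (hcompsub j)) hconn'
    have : x ∈ comp i := hEeq ▸ hjsub hx
    exact Set.disjoint_left.1 (hdisj i j hij) this hx
  set Bd : Fin k → Set G := fun i => (wordBall S r * comp i) \ comp i with hBd
  set BF : Set G := (wordBall S r * F) \ F with hBF
  have hBFfin : BF.Finite := (((wordBall_finite hSfin hSsym hSgen r).mul hFfin).diff)
  have hBsub : ∀ i, Bd i ⊆ BF := by
    intro i x hx
    obtain ⟨hx1, hx2⟩ := hx
    obtain ⟨b, hb, f, hf, rfl⟩ := hx1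
    refine ⟨⟨b, hb, f, hcompsub i hf, rfl⟩, ?_⟩
    intro hmem
    rw [← hcover] at hmem
    obtain ⟨j, hj⟩ := Set.mem_iUnion.1 hmem
    have hd : (wordDist S (b * f) f : ℝ) ≤ 2 * r := by
      have : wordDist S (b * f) f = wordLength S b := by
        simp [wordDist, mul_assoc]
      rw [this]
      have := hb
      simp only [wordBall, Set.mem_setOf_eq] at this
      linarith
    have := key i j f hf (b * f) hj hd
    subst this
    exact hx2 hj
  have hBdisj : ∀ i j, i ≠ j → Disjoint (Bd i) (Bd j) := by
    intro i j hij
    rw [Set.disjoint_left]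
    rintro x ⟨hx1, hni⟩ ⟨hx2, hnj⟩
    obtain ⟨b, hb, f, hf, hbf⟩ := hx1
    obtain ⟨b', hb', f', hf', hbf'⟩ := hx2
    simp only [wordBall, Set.mem_setOf_eq] at hb hb'
    have h1 : (wordLength S (f * x⁻¹) : ℝ) ≤ r := by
      have heq : f * x⁻¹ = (x * f⁻¹)⁻¹ := by group
      have h2 : wordLength S (f * x⁻¹) ≤ wordLength S (x * f⁻¹) := by
        rw [heq]; exact wordLength_inv_le hSsym hSgen _
      have h3 : x * f⁻¹ = b := by rw [← hbf]; group
      rw [h3] at h2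
      exact le_trans (Nat.cast_le.2 h2) hb
    have h2 : (wordLength S (x * f'⁻¹) : ℝ) ≤ r := by
      have h3 : x * f'⁻¹ = b' := by rw [← hbf']; group
      rw [h3]; exact hb'
    have tri : wordLength S (f * f'⁻¹) ≤ wordLength S (f * x⁻¹) + wordLength S (x * f'⁻¹) := by
      have := wordLength_mul_le hSsym hSgen (f * x⁻¹) (x * f'⁻¹)
      have heq : (f * x⁻¹) * (x * f'⁻¹) = f * f'⁻¹ := by group
      rwa [heq] at this
    have hd : (wordDist S f f' : ℝ) ≤ 2 * r := by
      have : (wordLength S (f * f'⁻¹) : ℝ) ≤ (wordLength S (f * x⁻¹) : ℝ) + (wordLength S (x * f'⁻¹) : ℝ) := by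
        exact_mod_cast tri
      simp only [wordDist]
      linarith
    have hd' : (wordDist S f' f : ℝ) ≤ 2 * r :=
      le_trans (Nat.cast_le.2 (wordDist_symm_le hSsym hSgen f f')) hd
    exact hij (key i j f hf f' hf' hd')
  have hk : 0 < k := by
    obtain ⟨x, hx⟩ := hFne
    rw [← hcover] at hx
    obtain ⟨i, -⟩ := Set.mem_iUnion.1 hx
    exact i.pos
  have hBdfin : ∀ i, (Bd i).Finite := fun i => hBFfin.subset (hBsub i)
  have hcardF : F.ncard = ∑ i, (comp i).ncard := by
    rw [Set.ncard_eq_toFinset_card _ hFfin]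
    have huni : hFfin.toFinset = Finset.univ.biUnion (fun i => (hcompfin i).toFinset) := by
      ext x
      simp only [Set.Finite.mem_toFinset, Finset.mem_biUnion, Finset.mem_univ, true_and]
      rw [← hcover]
      exact Set.mem_iUnion
    rw [huni, Finset.card_biUnion]
    · exact Finset.sum_congr rfl fun i _ => (Set.ncard_eq_toFinset_card _ (hcompfin i)).symm
    · intro i _ j _ hij
      simp only [Function.onFun]
      rw [Set.Finite.disjoint_toFinset]
      exact hdisj i j hij
  have hsumB : (∑ i, (Bd i).ncard) ≤ BF.ncard := by
    rw [Set.ncard_eq_toFinset_card _ hBFfin]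
    have h1 : ∑ i, (Bd i).ncard = (Finset.univ.biUnion fun i => (hBdfin i).toFinset).card := by
      rw [Finset.card_biUnion]
      · exact Finset.sum_congr rfl fun i _ => Set.ncard_eq_toFinset_card _ (hBdfin i)
      · intro i _ j _ hij
        simp only [Function.onFun]
        rw [Set.Finite.disjoint_toFinset]
        exact hBdisj i j hij
    rw [h1]
    apply Finset.card_le_card
    intro x hx
    simp only [Finset.mem_biUnion, Finset.mem_univ, true_and, Set.Finite.mem_toFinset] at hx ⊢
    obtain ⟨i, hi⟩ := hx
    exact hBsub i hi
  by_contra hcon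
  push_neg at hcon
  have hlt : η * (F.ncard : ℝ) < ∑ i, ((Bd i).ncard : ℝ) := by
    rw [hcardF]
    push_cast
    rw [Finset.mul_sum]
    exact Finset.sum_lt_sum_of_nonempty ⟨⟨0, hk⟩, Finset.mem_univ _⟩ fun i _ => hcon i
  have hle : (∑ i, ((Bd i).ncard : ℝ)) ≤ η * (F.ncard : ℝ) := by
    calc (∑ i, ((Bd i).ncard : ℝ)) = ((∑ i, (Bd i).ncard : ℕ) : ℝ) := by push_cast; ring
    _ ≤ (BF.ncard : ℝ) := by exact_mod_cast hsumB
    _ ≤ η * (F.ncard : ℝ) := hFbound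
  linarith
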